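/- A nonadditive measure μ is autocontinuous from above if and only if the reverse Fatou convergence-in-measure lemma holds for the Sugeno integral: for any sequence of measurable f_n ≥ 0 and measurable f ≥ 0 with f_n → f in μ-measure, one has limsup_n Su(μ,f_n) ≤ Su(μ,f). -/

import Mathlib

open scoped NNReal ENNReal
open ENNReal Filter Topology

variable {X : Type*} [MeasurableSpace X]

/-- The Sugeno integral of `g` w.r.t. a nonadditive measure `μ`:
`Su(μ,g) := sup_{t ∈ [0,∞)} min(t, μ({g > t}))`. -/
noncomputable def Su (μ : Set X → ℝ≥0∞) (g : X → ℝ≥0∞) : ℝ≥0∞ :=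
  ⨆ t : ℝ≥0, min (t : ℝ≥0∞) (μ {x | (t : ℝ≥0∞) < g x})

lemma su_indicator (μ : Set X → ℝ≥0∞) (h0 : μ ∅ = 0) (S : Set X) (c : ℝ≥0) :
    Su μ (fun x => ENNReal.ofReal (S.indicator (fun _ => (c : ℝ)) x)) = min (c : ℝ≥0∞) (μ S) := by
  have hset : ∀ t : ℝ≥0, {x | (t : ℝ≥0∞) < ENNReal.ofReal (S.indicator (fun _ => (c : ℝ)) x)}
      = if t < c then S else ∅ := by
    intro t
    ext x
    by_cases hx : x ∈ S <;> by_cases htc : t < c <;>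
      simp [Set.indicator_apply, hx, htc, ENNReal.ofReal_coe_nnreal]
  refine le_antisymm (iSup_le fun t => ?_) (le_of_forall_lt fun a ha => ?_)
  · rw [hset]
    by_cases htc : t < c
    · simp only [if_pos htc]
      exact min_le_min (ENNReal.coe_le_coe.2 htc.le) le_rfl
    · simp [if_neg htc, h0]
  · obtain ⟨ha1, ha2⟩ := lt_min_iff.1 ha
    obtain ⟨r, har, hrc⟩ := ENNReal.lt_iff_exists_nnreal_btwn.1 ha1
    refine lt_of_lt_of_le ?_ (le_iSup _ r)
    rw [hset, if_pos (ENNReal.coe_lt_coe.1 hrc)]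
    exact lt_min har ha2

/-- `μ` is autocontinuous from above iff the reverse Fatou convergence-in-measure lemma
holds for the Sugeno integral. -/
theorem autocontinuous_from_above_iff_reverse_fatou
    (μ : Set X → ℝ≥0∞) (h0 : μ ∅ = 0)
    (hmono : ∀ ⦃A B : Set X⦄, MeasurableSet A → MeasurableSet B → A ⊆ B → μ A ≤ μ B) :
    (∀ (A : Set X) (B : ℕ → Set X), MeasurableSet A → (∀ n, MeasurableSet (B n)) →
        Tendsto (fun n => μ (B n)) atTop (𝓝 0) →
        Tendsto (fun n => μ (A ∪ B n)) atTop (𝓝 (μ A))) ↔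
      (∀ (f : ℕ → X → ℝ) (g : X → ℝ), (∀ n, Measurable (f n)) → Measurable g →
        (∀ n x, 0 ≤ f n x) → (∀ x, 0 ≤ g x) →
        (∀ ε : ℝ, 0 < ε → Tendsto (fun n => μ {x | ε < |f n x - g x|}) atTop (𝓝 0)) →
        Filter.limsup (fun n => Su μ (fun x => ENNReal.ofReal (f n x))) atTop ≤
          Su μ (fun x => ENNReal.ofReal (g x))) := by
  constructor
  · -- autocontinuity → reverse Fatou
    intro hAC f g hf hg hf0 hg0 hconv
    set s := Su μ (fun x => ENNReal.ofReal (g x)) with hs_def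
    by_cases hs : s = ∞
    · exact hs ▸ le_top
    refine ENNReal.le_of_forall_pos_le_add fun δ hδ hfin => ?_
    have hδR : (0 : ℝ) < (δ : ℝ) / 2 := by positivity
    set A : Set X := {x | s.toReal + (δ : ℝ) / 2 < g x} with hA_def
    have hA : MeasurableSet A := measurableSet_lt measurable_const hg
    have hμA : μ A ≤ s := by
      by_contra hcon
      push_neg at hcon
      set t₀ : ℝ≥0 := s.toNNReal + δ / 2 with ht₀_def
      have ht₀R : ((t₀ : ℝ≥0∞)).toReal = s.toReal + (δ : ℝ) / 2 := by
        rw [ENNReal.coe_toReal, ht₀_def]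
        push_cast [ENNReal.coe_toNNReal_eq_toReal]
        ring
      have hset : {x | (t₀ : ℝ≥0∞) < ENNReal.ofReal (g x)} = A := by
        ext x
        simp only [hA_def, Set.mem_setOf_eq]
        rw [ENNReal.lt_ofReal_iff_toReal_lt ENNReal.coe_ne_top, ht₀R]
      have hle : min (t₀ : ℝ≥0∞) (μ A) ≤ s := by
        rw [← hset, hs_def]
        exact le_iSup (fun t : ℝ≥0 => min (t : ℝ≥0∞) (μ {x | (t : ℝ≥0∞) < ENNReal.ofReal (g x)})) t₀
      have hst₀ : s < (t₀ : ℝ≥0∞) := by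
        rw [ht₀_def, ENNReal.coe_add, ENNReal.coe_toNNReal hs]
        exact ENNReal.lt_add_right hs (by simpa using hδ.ne')
      exact absurd hle (not_le.2 (lt_min hst₀ hcon))
    set D : ℕ → Set X := fun n => {x | (δ : ℝ) / 2 < |f n x - g x|} with hD_def
    have hD : ∀ n, MeasurableSet (D n) := fun n =>
      measurableSet_lt measurable_const ((hf n).sub hg).abs
    have hμD : Tendsto (fun n => μ (D n)) atTop (𝓝 0) := hconv _ hδR
    have htend := hAC A D hA hD hμD
    have hμAδ : μ A < s + δ :=
      lt_of_le_of_lt hμA (ENNReal.lt_add_right hfin.ne (ENNReal.coe_ne_zero.2 hδ.ne'))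
    have hev : ∀ᶠ n in atTop, μ (A ∪ D n) < s + δ := htend.eventually_lt_const hμAδ
    refine limsup_le_of_le (by isBoundedDefault) (hev.mono fun n hn => ?_)
    refine iSup_le fun t => ?_
    by_cases ht : (t : ℝ≥0∞) ≤ s + δ
    · exact (min_le_left _ _).trans ht
    · push_neg at ht
      refine (min_le_right _ _).trans
        (le_trans (hmono ?_ (hA.union (hD n)) ?_) hn.le)
      · exact measurableSet_lt measurable_const (hf n).ennreal_ofReal
      · intro x hx
        by_cases hxD : x ∈ D n
        · exact Or.inr hxD
        · left
          have h1 : (t : ℝ) < f n x := by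
            have := (ENNReal.lt_ofReal_iff_toReal_lt ENNReal.coe_ne_top).1 hx
            simpa using this
          have h2 : |f n x - g x| ≤ (δ : ℝ) / 2 := not_lt.1 hxD
          have h3 : s.toReal + (δ : ℝ) < (t : ℝ) := by
            have h := (ENNReal.toReal_lt_toReal (by finiteness) ENNReal.coe_ne_top).2 ht
            rwa [ENNReal.toReal_add hs ENNReal.coe_ne_top, ENNReal.coe_toReal,
              ENNReal.coe_toReal] at h
          have h4 : f n x - g x ≤ (δ : ℝ) / 2 := (abs_le.1 h2).2
          show s.toReal + (δ : ℝ) / 2 < g x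
          linarith
  · -- reverse Fatou → autocontinuity
    intro H A B hA hB hμB
    have hub : ∀ n, μ A ≤ μ (A ∪ B n) := fun n =>
      hmono hA (hA.union (hB n)) Set.subset_union_left
    refine tendsto_order.2 ⟨fun l hl => Eventually.of_forall fun n => lt_of_lt_of_le hl (hub n),
      fun u hu => ?_⟩
    obtain ⟨c, hc1, hc2⟩ := ENNReal.lt_iff_exists_nnreal_btwn.1 hu
    set f : ℕ → X → ℝ := fun n => (A ∪ B n).indicator fun _ => (c : ℝ) with hf_def
    set g : X → ℝ := A.indicator fun _ => (c : ℝ) with hg_def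
    have hconv : ∀ ε : ℝ, 0 < ε →
        Tendsto (fun n => μ {x | ε < |f n x - g x|}) atTop (𝓝 0) := by
      intro ε hε
      by_cases hεc : ε < (c : ℝ)
      · have hset : ∀ n, {x | ε < |f n x - g x|} = B n \ A := by
          intro n
          ext x
          by_cases hx : x ∈ A
          · simp [hf_def, hg_def, Set.indicator_apply, hx, hε.not_gt]
          · by_cases hxB : x ∈ B n
            · simp [hf_def, hg_def, Set.indicator_apply, hx, hxB,
                abs_of_nonneg c.coe_nonneg, hεc]
            · simp [hf_def, hg_def, Set.indicator_apply, hx, hxB, hε.not_gt]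
        simp_rw [hset]
        refine tendsto_of_tendsto_of_tendsto_of_le_of_le tendsto_const_nhds hμB
          (fun n => zero_le) (fun n => hmono ((hB n).diff hA) (hB n) Set.diff_subset)
      · have hset : ∀ n, {x | ε < |f n x - g x|} = (∅ : Set X) := by
          intro n
          ext x
          by_cases hx : x ∈ A
          · simp [hf_def, hg_def, Set.indicator_apply, hx, hε.not_gt]
          · by_cases hxB : x ∈ B n
            · simp [hf_def, hg_def, Set.indicator_apply, hx, hxB,
                abs_of_nonneg c.coe_nonneg, not_lt.1 hεc, (not_lt.1 hεc).not_gt]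
            · simp [hf_def, hg_def, Set.indicator_apply, hx, hxB, hε.not_gt]
        simp_rw [hset, h0]
        exact tendsto_const_nhds
    have key := H f g (fun n => measurable_const.indicator (hA.union (hB n)))
      (measurable_const.indicator hA)
      (fun n x => Set.indicator_nonneg (fun _ _ => c.coe_nonneg) x)
      (fun x => Set.indicator_nonneg (fun _ _ => c.coe_nonneg) x) hconv
    have hfn : ∀ n, Su μ (fun x => ENNReal.ofReal (f n x)) = min (c : ℝ≥0∞) (μ (A ∪ B n)) :=
      fun n => su_indicator μ h0 _ c
    have hgeq : Su μ (fun x => ENNReal.ofReal (g x)) = μ A := by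
      rw [hg_def]
      rw [su_indicator μ h0 A c]
      exact min_eq_right hc1.le
    rw [hgeq] at key
    simp_rw [hfn] at key
    have key' : Filter.limsup (fun n => min (c : ℝ≥0∞) (μ (A ∪ B n))) atTop < (c : ℝ≥0∞) :=
      lt_of_le_of_lt key hc1
    have hev := eventually_lt_of_limsup_lt key'
    refine hev.mono fun n hn => ?_
    rcases min_lt_iff.1 hn with h | h
    · exact absurd h (lt_irrefl _)
    · exact h.trans hc2
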